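/- Let ℓ(x) = x·log x − x + 1 (with ℓ(0) = 1). Fix T > 0, an integer m ≥ 1, and positive real numbers θ_1, …, θ_m with Σ_{i=1}^{m} θ_i^{−1} = T. Set a = m/T. Then Σ_{i=1}^{m} θ_i^{−1} · [ ℓ((θ_i + √(θ_i² + 4))/2) + ℓ((−θ_i + √(θ_i² + 4))/2) ] ≥ T·ℓ((a + √(4 + a²))/2) + T·ℓ((−a + √(4 + a²))/2). -/

import Mathlib

/-- `ℓ(x) = x log x - x + 1`, with `ℓ(0) = 1` (since `Real.log 0 = 0`). -/
noncomputable def ell (x : ℝ) : ℝ := x * Real.log x - x + 1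

open Set

noncomputable def phi (t : ℝ) : ℝ :=
  Real.arsinh ((2*t)⁻¹) + 2*t - Real.sqrt (1+4*t^2)

noncomputable def phiD (t : ℝ) : ℝ :=
  2 - 4*t/Real.sqrt (1+4*t^2) - (t * Real.sqrt (1+4*t^2))⁻¹

lemma sqrt14_pos (t : ℝ) : 0 < Real.sqrt (1+4*t^2) :=
  Real.sqrt_pos.2 (by positivity)

lemma sq_sqrt14 (t : ℝ) : Real.sqrt (1+4*t^2) ^ 2 = 1+4*t^2 :=
  Real.sq_sqrt (by positivity)

lemma hasDerivAt_s (t : ℝ) :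
    HasDerivAt (fun t => Real.sqrt (1+4*t^2)) (4*t/Real.sqrt (1+4*t^2)) t := by
  have h : HasDerivAt (fun t : ℝ => 1+4*t^2) (8*t) t := by
    have h0 := ((hasDerivAt_pow 2 t).const_mul (4:ℝ)).const_add (1:ℝ)
    refine h0.congr_deriv ?_; push_cast; ring
  have := (Real.hasDerivAt_sqrt (by positivity : (1+4*t^2:ℝ) ≠ 0)).comp t h
  refine this.congr_deriv ?_
  field_simp
  ring

lemma hasDerivAt_phi {t : ℝ} (ht : 0 < t) : HasDerivAt phi (phiD t) t := by
  have hs := sqrt14_pos t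
  have h1 : HasDerivAt (fun t : ℝ => (2*t)⁻¹) (-2/(2*t)^2) t := by
    have := ((hasDerivAt_id t).const_mul (2:ℝ)).inv (by positivity)
    exact this.congr_deriv (by simp)
  have h2 := (Real.hasDerivAt_arsinh ((2*t)⁻¹)).comp t h1
  have h3 : HasDerivAt (fun t : ℝ => 2*t) 2 t := by
    simpa using (hasDerivAt_id t).const_mul (2:ℝ)
  have h4 := hasDerivAt_s t
  have key : Real.sqrt (1+((2*t)⁻¹)^2) = Real.sqrt (1+4*t^2)/(2*t) := by
    rw [show (1+((2*t)⁻¹)^2 : ℝ) = (Real.sqrt (1+4*t^2)/(2*t))^2 by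
      rw [div_pow, sq_sqrt14]; field_simp; ring]
    exact Real.sqrt_sq (by positivity)
  have total := (h2.add h3).sub h4
  refine HasDerivAt.congr_deriv (f := phi) total ?_
  rw [key]
  unfold phiD
  field_simp
  ring

lemma hasDerivAt_phiD {t : ℝ} (ht : 0 < t) :
    HasDerivAt phiD ((t^2 * Real.sqrt (1+4*t^2))⁻¹) t := by
  have hs := sqrt14_pos t
  have hs2 := sq_sqrt14 t
  have h4 := hasDerivAt_s t
  have hA : HasDerivAt (fun t : ℝ => 4*t/Real.sqrt (1+4*t^2))
      ((4*Real.sqrt (1+4*t^2) - 4*t*(4*t/Real.sqrt (1+4*t^2)))/(Real.sqrt (1+4*t^2))^2) t := by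
    have := (((hasDerivAt_id t).const_mul (4:ℝ)).div h4 (ne_of_gt hs))
    exact this.congr_deriv (by simp)
  have hB : HasDerivAt (fun t : ℝ => (t * Real.sqrt (1+4*t^2))⁻¹)
      (-(1*Real.sqrt (1+4*t^2) + t*(4*t/Real.sqrt (1+4*t^2)))/(t*Real.sqrt (1+4*t^2))^2) t := by
    exact ((hasDerivAt_id t).mul h4).inv (mul_ne_zero ht.ne' hs.ne')
  have total := ((hasDerivAt_const t (2:ℝ)).sub hA).sub hB
  refine HasDerivAt.congr_deriv (f := phiD) total ?_
  field_simp
  linear_combination (-4*t^2) * hs2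

lemma convex_phi : ConvexOn ℝ (Ioi (0:ℝ)) phi := by
  have hmono : MonotoneOn (deriv phi) (interior (Ioi (0:ℝ))) := by
    rw [interior_Ioi]
    have m1 : MonotoneOn phiD (Ioi (0:ℝ)) := by
      apply monotoneOn_of_deriv_nonneg (convex_Ioi 0)
      · exact fun x hx => ((hasDerivAt_phiD hx).continuousAt).continuousWithinAt
      · rw [interior_Ioi]
        exact fun x hx => (hasDerivAt_phiD hx).differentiableAt.differentiableWithinAt
      · rw [interior_Ioi]
        intro x hx
        rw [(hasDerivAt_phiD hx).deriv]
        positivity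
    intro a ha b hb hab
    rw [(hasDerivAt_phi ha).deriv, (hasDerivAt_phi hb).deriv]
    exact m1 ha hb hab
  exact hmono.convexOn_of_deriv (convex_Ioi 0)
    (fun x hx => ((hasDerivAt_phi hx).continuousAt).continuousWithinAt)
    (by rw [interior_Ioi]
        exact fun x hx => (hasDerivAt_phi hx).differentiableAt.differentiableWithinAt)

lemma ell_pair {θ : ℝ} (hθ : 0 < θ) :
    θ⁻¹ * (ell ((θ + Real.sqrt (θ^2+4))/2) + ell ((-θ + Real.sqrt (θ^2+4))/2))
      = phi θ⁻¹ := by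
  have hθ' : θ ≠ 0 := ne_of_gt hθ
  set s := Real.sqrt (θ^2+4) with hsdef
  have hs2 : s^2 = θ^2+4 := Real.sq_sqrt (by positivity)
  have hspos : 0 < s := Real.sqrt_pos.2 (by positivity)
  have hθs : θ < s := by nlinarith
  have hu : 0 < (θ+s)/2 := by linarith
  have hlogv : Real.log ((-θ+s)/2) = - Real.log ((θ+s)/2) := by
    rw [show (-θ+s)/2 = ((θ+s)/2)⁻¹ by
      field_simp
      linear_combination hs2]
    exact Real.log_inv _
  have harsinh : Real.arsinh (θ/2) = Real.log ((θ+s)/2) := by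
    have h1 : Real.sqrt (1+(θ/2)^2) = s/2 := by
      rw [show (1+(θ/2)^2 : ℝ) = (s/2)^2 by linear_combination (-1/4)*hs2]
      exact Real.sqrt_sq (by positivity)
    rw [Real.arsinh, h1]
    congr 1
    ring
  have key : ell ((θ+s)/2) + ell ((-θ+s)/2) = θ * Real.log ((θ+s)/2) - s + 2 := by
    simp only [ell, hlogv]
    ring
  have hsq : Real.sqrt (1+4*(θ⁻¹)^2) = θ⁻¹ * s := by
    rw [show (1+4*(θ⁻¹)^2 : ℝ) = (θ⁻¹*s)^2 by
      field_simp
      linear_combination -hs2]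
    exact Real.sqrt_sq (by positivity)
  have hinv : ((2*θ⁻¹)⁻¹ : ℝ) = θ/2 := by
    rw [mul_inv, inv_inv]
    ring
  unfold phi
  rw [hinv, harsinh, hsq, key]
  field_simp
  ring

/-- Key deterministic inequality from the proof of Theorem 2.6: for `θ_1, …, θ_m > 0` with
`∑ θ_i⁻¹ = T` and `a = m / T`,
`∑ θ_i⁻¹ [ℓ((θ_i + √(θ_i² + 4))/2) + ℓ((-θ_i + √(θ_i² + 4))/2)]`
`≥ T ℓ((a + √(4 + a²))/2) + T ℓ((-a + √(4 + a²))/2)`. -/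
theorem cost_lower_bound (T : ℝ) (hT : 0 < T) (m : ℕ) (hm : 1 ≤ m)
    (θ : Fin m → ℝ) (hθ : ∀ i, 0 < θ i) (hsum : ∑ i, (θ i)⁻¹ = T) :
    T * ell (((m : ℝ) / T + Real.sqrt (4 + ((m : ℝ) / T) ^ 2)) / 2) +
      T * ell ((-((m : ℝ) / T) + Real.sqrt (4 + ((m : ℝ) / T) ^ 2)) / 2) ≤
    ∑ i, (θ i)⁻¹ *
      (ell ((θ i + Real.sqrt ((θ i) ^ 2 + 4)) / 2) +
        ell ((-(θ i) + Real.sqrt ((θ i) ^ 2 + 4)) / 2)) := by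
  have hmpos : (0:ℝ) < m := by exact_mod_cast Nat.lt_of_lt_of_le Nat.zero_lt_one hm
  have hm0 : (m:ℝ) ≠ 0 := ne_of_gt hmpos
  have hapos : 0 < (m:ℝ)/T := div_pos hmpos hT
  rw [show (4 + ((m:ℝ)/T)^2 : ℝ) = ((m:ℝ)/T)^2 + 4 by ring]
  have h₁ : ∑ _i : Fin m, (m:ℝ)⁻¹ = 1 := by
    simp only [Finset.sum_const, Finset.card_univ, Fintype.card_fin, nsmul_eq_mul]
    exact mul_inv_cancel₀ hm0
  have hJ := convex_phi.map_sum_le (t := Finset.univ) (w := fun _ : Fin m => (m:ℝ)⁻¹)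
      (p := fun i => (θ i)⁻¹) (fun i _ => by positivity) h₁
      (fun i _ => by exact inv_pos.2 (hθ i))
  have hsum' : ∑ i : Fin m, (m:ℝ)⁻¹ • (θ i)⁻¹ = (m:ℝ)⁻¹ * T := by
    simp only [smul_eq_mul, ← Finset.mul_sum, hsum]
  rw [hsum'] at hJ
  have ha_inv : (((m:ℝ)/T))⁻¹ = (m:ℝ)⁻¹ * T := by
    rw [inv_div, div_eq_inv_mul]
  have hTa : T * ((m:ℝ)/T) = m := by field_simp
  have hpair := ell_pair hapos
  rw [ha_inv] at hpair
  have h2 : ell (((m:ℝ)/T + Real.sqrt (((m:ℝ)/T)^2+4))/2)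
      + ell ((-((m:ℝ)/T) + Real.sqrt (((m:ℝ)/T)^2+4))/2)
      = ((m:ℝ)/T) * phi ((m:ℝ)⁻¹*T) := by
    rw [← hpair]
    field_simp
  calc T * ell (((m:ℝ)/T + Real.sqrt (((m:ℝ)/T)^2+4))/2)
        + T * ell ((-((m:ℝ)/T) + Real.sqrt (((m:ℝ)/T)^2+4))/2)
      = (m:ℝ) * phi ((m:ℝ)⁻¹*T) := by
        rw [show ∀ x y : ℝ, T*x + T*y = T*(x+y) from fun x y => by ring, h2, ← mul_assoc, hTa]
    _ ≤ (m:ℝ) * ∑ i : Fin m, (m:ℝ)⁻¹ • phi (θ i)⁻¹ :=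
        mul_le_mul_of_nonneg_left hJ (le_of_lt hmpos)
    _ = ∑ i : Fin m, phi (θ i)⁻¹ := by
        simp only [smul_eq_mul, ← Finset.mul_sum, ← mul_assoc]
        field_simp
    _ = ∑ i, (θ i)⁻¹ *
          (ell ((θ i + Real.sqrt ((θ i)^2+4))/2) + ell ((-(θ i) + Real.sqrt ((θ i)^2+4))/2)) :=
        Finset.sum_congr rfl (fun i _ => (ell_pair (hθ i)).symm)
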